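/- Let A = pI + qJ(r̂) ∈ 𝔸 and let v = (x, y)ᵀ ∈ 𝕍 be normalized (v†v = 1) with Av = vλ_v for some λ_v ∈ 𝕆. Set w = (y, x)ᵀ, so that Aw = wλ_w with λ_w = 2p − λ_v. Then A decomposes as A = (vλ_v)v† + (wλ_w)w†, where (vλ)v† denotes the 2×2 matrix whose (i,j) entry is (v_i λ)v̄_j. -/

import Mathlib

noncomputable section

open scoped BigOperators Matrix

/-- The octonions `𝕆`, realized as the Cayley–Dickson double of the quaternions. -/
def Oct : Type := Quaternion ℝ × Quaternion ℝ

namespace Oct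

instance : AddCommGroup Oct := inferInstanceAs (AddCommGroup (Quaternion ℝ × Quaternion ℝ))
instance : Module ℝ Oct := inferInstanceAs (Module ℝ (Quaternion ℝ × Quaternion ℝ))

instance : One Oct := ⟨((1 : Quaternion ℝ), (0 : Quaternion ℝ))⟩

/-- Cayley–Dickson multiplication on `ℍ × ℍ`:
`(a, b) * (c, d) = (a c − d̄ b, d a + b c̄)`. -/
instance : Mul Oct :=
  ⟨fun x y => (x.1 * y.1 - star y.2 * x.2, y.2 * x.1 + x.2 * star y.1)⟩

theorem mul_def (x y : Oct) :
    x * y = (x.1 * y.1 - star y.2 * x.2, y.2 * x.1 + x.2 * star y.1) := rfl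

@[simp] theorem fst_zero : (0 : Oct).1 = 0 := rfl
@[simp] theorem snd_zero : (0 : Oct).2 = 0 := rfl
@[simp] theorem fst_one : (1 : Oct).1 = 1 := rfl
@[simp] theorem snd_one : (1 : Oct).2 = 0 := rfl
@[simp] theorem fst_add (x y : Oct) : (x + y).1 = x.1 + y.1 := rfl
@[simp] theorem snd_add (x y : Oct) : (x + y).2 = x.2 + y.2 := rfl

instance : NonAssocRing Oct :=
  { (inferInstance : AddCommGroup Oct), (inferInstance : One Oct), (inferInstance : Mul Oct) with
    left_distrib := by
      intro x y z
      refine Prod.ext ?_ ?_ <;>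
        simp only [fst_add, snd_add] <;> simp only [mul_def, fst_add, snd_add, star_add] <;>
          noncomm_ring
    right_distrib := by
      intro x y z
      refine Prod.ext ?_ ?_ <;>
        simp only [fst_add, snd_add] <;> simp only [mul_def, fst_add, snd_add, star_add] <;>
          noncomm_ring
    zero_mul := by
      intro x
      refine Prod.ext ?_ ?_ <;> simp [mul_def]
    mul_zero := by
      intro x
      refine Prod.ext ?_ ?_ <;> simp [mul_def]
    one_mul := by
      intro x
      refine Prod.ext ?_ ?_ <;> simp [mul_def]
    mul_one := by
      intro x
      refine Prod.ext ?_ ?_ <;> simp [mul_def] }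

/-- Octonionic conjugation `a ↦ ā`. -/
def conj (x : Oct) : Oct := (star x.1, -x.2)

/-- The canonical embedding of `ℝ` into `𝕆`. -/
def oR (r : ℝ) : Oct := r • (1 : Oct)

/-- Real part `Re(a) = (a + ā)/2`, as an octonion. -/
def re (x : Oct) : Oct := (2 : ℝ)⁻¹ • (x + conj x)

/-- Imaginary part `Im(a) = (a − ā)/2`, as an octonion. -/
def im (x : Oct) : Oct := (2 : ℝ)⁻¹ • (x - conj x)

/-- The coefficient of `1` in an octonion (real-part coefficient). -/
def reCoeff (x : Oct) : ℝ := x.1.re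

/-- Inner product `a·b = (a b̄ + b ā)/2`, a real octonion. -/
def dot (a b : Oct) : Oct := (2 : ℝ)⁻¹ • (a * conj b + b * conj a)

/-- Norm `|a| = √(a ā)`. -/
def onorm (a : Oct) : ℝ := Real.sqrt (reCoeff (a * conj a))

/-- Octonionic associator `[a,b,c] = (ab)c − a(bc)`. -/
def assoc (a b c : Oct) : Oct := a * b * c - a * (b * c)

/-- The general 2×2 octonionic Hermitian matrix `[[p, a], [ā, m]]`. -/
def herm2 (p m : ℝ) (a : Oct) : Matrix (Fin 2) (Fin 2) Oct := !![oR p, a; conj a, oR m]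

/-- `J(r̂) = [[0, −r̂], [r̂, 0]]`. -/
def J (r : Oct) : Matrix (Fin 2) (Fin 2) Oct := !![0, -r; r, 0]

/-- The set `𝔸` of matrices `p I + q J(r̂)` with `p, q ∈ ℝ`, `q ≠ 0`,
and `r̂` a pure imaginary unit octonion (equivalently `r̂ ² = −1`). -/
def memA (A : Matrix (Fin 2) (Fin 2) Oct) : Prop :=
  ∃ (p q : ℝ) (r : Oct), q ≠ 0 ∧ r * r = -1 ∧
    A = p • (1 : Matrix (Fin 2) (Fin 2) Oct) + q • J r

/-- The set `𝕍` of vectors `(x, y)ᵀ ∈ 𝕆²` with `|x|² = |y|²` and `x·y = 0`. -/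
def memV (v : Fin 2 → Oct) : Prop :=
  onorm (v 0) ^ 2 = onorm (v 1) ^ 2 ∧ dot (v 0) (v 1) = 0

/-- The general 3×3 octonionic Hermitian matrix `[[p, a, b̄], [ā, m, c], [b, c̄, n]]`. -/
def herm3 (p m n : ℝ) (a b c : Oct) : Matrix (Fin 3) (Fin 3) Oct :=
  !![oR p, a, conj b; conj a, oR m, c; b, conj c, oR n]

/-- Vector associator `[U,V,W] = (U V†) W − U (V† W)`. -/
def vAssoc {n : ℕ} (U V W : Fin n → Oct) : Fin n → Oct :=
  fun i => (∑ j, (U i * conj (V j)) * W j) - U i * (∑ j, conj (V j) * W j)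

/-- Outer product `U V†`, the matrix with `(i,j)` entry `U_i V̄_j`. -/
def outer {n : ℕ} (U V : Fin n → Oct) : Matrix (Fin n) (Fin n) Oct :=
  Matrix.of fun i j => U i * conj (V j)

/-- `Ã = A − (tr A) I`. -/
def tilde {n : ℕ} (A : Matrix (Fin n) (Fin n) Oct) : Matrix (Fin n) (Fin n) Oct :=
  A - Matrix.of fun i j => if i = j then Matrix.trace A else 0

end Oct

open Oct

namespace Oct

theorem fst_smul (c : ℝ) (x : Oct) : (c • x).1 = c • x.1 := rfl
theorem snd_smul (c : ℝ) (x : Oct) : (c • x).2 = c • x.2 := rfl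

theorem smul_mul (c : ℝ) (a b : Oct) : (c • a) * b = c • (a * b) := by
  refine Prod.ext ?_ ?_ <;> simp only [fst_smul, snd_smul] <;>
    simp [mul_def, fst_smul, snd_smul, smul_sub, smul_add, mul_smul_comm, smul_mul_assoc]

theorem mul_smul' (c : ℝ) (a b : Oct) : a * (c • b) = c • (a * b) := by
  refine Prod.ext ?_ ?_ <;> simp only [fst_smul, snd_smul] <;>
    simp [mul_def, fst_smul, snd_smul, smul_sub, smul_add, mul_smul_comm, smul_mul_assoc]

theorem mul_oR (c : ℝ) (x : Oct) : x * oR c = c • x := by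
  rw [oR, mul_smul', mul_one]

theorem fst_conj (x : Oct) : (conj x).1 = star x.1 := rfl
theorem snd_conj (x : Oct) : (conj x).2 = -x.2 := rfl

theorem fst_mul (x y : Oct) : (x * y).1 = x.1 * y.1 - star y.2 * x.2 := rfl
theorem snd_mul (x y : Oct) : (x * y).2 = y.2 * x.1 + x.2 * star y.1 := rfl

theorem conj_mul_self (x : Oct) : x * conj x = conj x * x := by
  refine Prod.ext ?_ ?_ <;>
    simp only [mul_def] <;> simp [conj] <;> apply Quaternion.ext <;>
    simp [Quaternion.re_mul, Quaternion.imI_mul, Quaternion.imJ_mul, Quaternion.imK_mul] <;> ring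

set_option maxHeartbeats 2000000 in
theorem key3 (r a b : Oct) :
    (r * a) * conj b + (r * b) * conj a = r * (a * conj b + b * conj a) := by
  refine Prod.ext ?_ ?_ <;>
    simp only [fst_mul, snd_mul, fst_conj, snd_conj, fst_add, snd_add, star_sub, star_add, star_star, star_mul] <;>
    apply Quaternion.ext <;>
    simp [Quaternion.re_mul, Quaternion.imI_mul, Quaternion.imJ_mul, Quaternion.imK_mul] <;> ring

set_option maxHeartbeats 2000000 in
theorem key2 (r a : Oct) : (r * a) * conj a = r * (a * conj a) := by
  refine Prod.ext ?_ ?_ <;>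
    simp only [fst_mul, snd_mul, fst_conj, snd_conj, fst_add, snd_add, star_sub, star_add, star_star, star_mul] <;>
    apply Quaternion.ext <;>
    simp [Quaternion.re_mul, Quaternion.imI_mul, Quaternion.imJ_mul, Quaternion.imK_mul] <;> ring

end Oct

open Oct

/-- for `A ∈ 𝔸` and normalized `v = (x,y)ᵀ ∈ 𝕍` with `Av = vλ_v`,
setting `w = (y,x)ᵀ`, so that `Aw = wλ_w` with `λ_w = 2p − λ_v`, one has
`A = (vλ_v)v† + (wλ_w)w†`. -/
theorem stmt_10 (p q : ℝ) (r : Oct) (hq : q ≠ 0) (hr : r * r = -1)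
    (A : Matrix (Fin 2) (Fin 2) Oct)
    (hA : A = p • (1 : Matrix (Fin 2) (Fin 2) Oct) + q • J r)
    (x y lamv : Oct) (hV : memV ![x, y])
    (hnorm : conj x * x + conj y * y = 1)
    (heig : A.mulVec ![x, y] = fun i => ![x, y] i * lamv) :
    (A.mulVec ![y, x] = fun i => ![y, x] i * (oR (2 * p) - lamv)) ∧
      A = Matrix.of fun i j =>
        (![x, y] i * lamv) * conj (![x, y] j) +
          (![y, x] i * (oR (2 * p) - lamv)) * conj (![y, x] j) := by
  subst hA
  -- extract eigen equations
  have h0 := congrFun heig 0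
  have h1 := congrFun heig 1
  simp [Matrix.mulVec, dotProduct, Fin.sum_univ_two, J, Matrix.one_apply,
    smul_mul, neg_mul] at h0 h1
  -- h0 : p • x - q • (r * y) = x * lamv  (hopefully)
  have hxx : x * conj x + y * conj y = 1 := by
    rw [conj_mul_self, conj_mul_self]; exact hnorm
  have hxy : x * conj y + y * conj x = 0 := by
    have h := hV.2
    simp only [memV, Matrix.cons_val_zero, Matrix.cons_val_one, Matrix.head_cons, dot] at h
    have h2 : ((2 : ℝ)⁻¹ : ℝ) ≠ 0 := by norm_num
    rcases smul_eq_zero.mp h with h' | h'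
    · exact absurd h' h2
    · exact h'
  have sv : x * lamv = p • x - q • (r * y) := by rw [← h0]; abel
  have sv' : y * lamv = q • (r * x) + p • y := h1.symm
  have sw0 : y * (oR (2 * p) - lamv) = p • y - q • (r * x) := by
    rw [mul_sub, mul_oR, ← h1]; module
  have sw1 : x * (oR (2 * p) - lamv) = p • x + q • (r * y) := by
    rw [mul_sub, mul_oR, ← h0]; module
  have k1 : (r * x) * conj x + (r * y) * conj y = r := by
    rw [key2, key2, ← mul_add, hxx, mul_one]
  have k2 : (r * y) * conj x + (r * x) * conj y = 0 := by
    rw [key3, show y * conj x + x * conj y = 0 by rw [add_comm]; exact hxy, mul_zero]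
  constructor
  · funext i
    fin_cases i <;>
      simp [Matrix.mulVec, dotProduct, Fin.sum_univ_two, J, Matrix.one_apply,
        smul_mul, neg_mul]
    · rw [sw0, sub_eq_add_neg]
    · rw [sw1]; abel
  · ext i j
    fin_cases i <;> fin_cases j <;>
      simp [Matrix.add_apply, Matrix.smul_apply, Matrix.one_apply, J]
    · -- (0,0)
      have e : x * lamv * conj x + y * (oR (2 * p) - lamv) * conj y =
          p • (x * conj x + y * conj y) - q • ((r * y) * conj x + (r * x) * conj y) := by
        rw [sv, sw0, sub_mul, sub_mul, smul_mul, smul_mul, smul_mul, smul_mul, smul_add, smul_add]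
        abel
      rw [e, hxx, k2, smul_zero, sub_zero]
    · -- (0,1)
      have e : x * lamv * conj y + y * (oR (2 * p) - lamv) * conj x =
          p • (x * conj y + y * conj x) - q • ((r * x) * conj x + (r * y) * conj y) := by
        rw [sv, sw0, sub_mul, sub_mul, smul_mul, smul_mul, smul_mul, smul_mul, smul_add, smul_add]
        abel
      rw [e, hxy, k1, smul_zero, zero_sub]
    · -- (1,0)
      have e : y * lamv * conj x + x * (oR (2 * p) - lamv) * conj y =
          p • (x * conj y + y * conj x) + q • ((r * x) * conj x + (r * y) * conj y) := by
        rw [sv', sw1, add_mul, add_mul, smul_mul, smul_mul, smul_mul, smul_mul, smul_add, smul_add]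
        abel
      rw [e, hxy, k1, smul_zero, zero_add]
    · -- (1,1)
      have e : y * lamv * conj y + x * (oR (2 * p) - lamv) * conj x =
          p • (x * conj x + y * conj y) + q • ((r * x) * conj y + (r * y) * conj x) := by
        rw [sv', sw1, add_mul, add_mul, smul_mul, smul_mul, smul_mul, smul_mul, smul_add, smul_add]
        abel
      rw [e, hxx, show (r * x) * conj y + (r * y) * conj x = 0 by rw [add_comm]; exact k2,
        smul_zero, add_zero]
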